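/- Let α ∈ [0,2], r : ℝ → ℝ measurable with r = 0 on [−ε,ε] and x·r(x) > 0 a.e. off [−ε,ε] for some ε > 0, η_α(x) := (√(|x|^α+1) − √(|x|^α))|r(x)|, ω_α(x) := √(|x|^α)|r(x)|. Then for every f in L²(ω_α), writing f_o(x) = ½(f(x) − f(−x)), one has ∫ (√(|x|^α+1) f(x) − √(|x|^α) f(−x))·conj(f(x))·|r(x)| dx = 2∫|f_o|² ω_α dx + ∫|f|² η_α dx, and in particular the left-hand side is nonnegative and finite. -/

import Mathlib

open MeasureTheory Filter

/-- `η_α(x) := (√(|x|^α+1) − √(|x|^α))·|r(x)|`. -/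
noncomputable def eta (α : ℝ) (r : ℝ → ℝ) (x : ℝ) : ℝ :=
  (Real.sqrt (|x| ^ α + 1) - Real.sqrt (|x| ^ α)) * |r x|

/-- `ω_α(x) := √(|x|^α)·|r(x)|`. -/
noncomputable def omegaW (α : ℝ) (r : ℝ → ℝ) (x : ℝ) : ℝ :=
  Real.sqrt (|x| ^ α) * |r x|

/-- `r₊(x) := x·r(x)`. -/
def rplus (r : ℝ → ℝ) (x : ℝ) : ℝ := x * r x

/-- `r₋(x) := r(x)/x` (with junk value `0` at `x = 0`, where `r` vanishes anyway). -/
noncomputable def rminus (r : ℝ → ℝ) (x : ℝ) : ℝ := r x / x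

/-- Membership in the weighted space `L²(w)`. -/
def MemL2W (w : ℝ → ℝ) (f : ℝ → ℂ) : Prop :=
  Integrable (fun x => ‖f x‖ ^ 2 * w x)

/-- Even part of a function. -/
noncomputable def evenPart (f : ℝ → ℂ) (x : ℝ) : ℂ := (f x + f (-x)) / 2

/-- Odd part of a function. -/
noncomputable def oddPart (f : ℝ → ℂ) (x : ℝ) : ℂ := (f x - f (-x)) / 2

/-- `dom t_α = {f ∈ L²(r₋) : f_e ∈ L²(η_α), f_o ∈ L²(ω_α)}`. -/
noncomputable def DomT (α : ℝ) (r : ℝ → ℝ) (f : ℝ → ℂ) : Prop :=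
  MemL2W (rminus r) f ∧ MemL2W (eta α r) (evenPart f) ∧ MemL2W (omegaW α r) (oddPart f)

/-- The squared norm `t_α(f,f) = 2‖f_o‖²_{ω_α} + ‖f‖²_{η_α}`. -/
noncomputable def Qform (α : ℝ) (r : ℝ → ℝ) (f : ℝ → ℂ) : ℝ :=
  2 * (∫ x, ‖oddPart f x‖ ^ 2 * omegaW α r x) + ∫ x, ‖f x‖ ^ 2 * eta α r x

/-- Lemma on `Q_α`: for `f ∈ L²(ω_α)`,
`∫ (√(|x|^α+1) f(x) − √(|x|^α) f(−x))·conj(f(x))·|r(x)| dx = 2‖f_o‖²_{ω_α} + ‖f‖²_{η_α}`,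
and in particular this quantity is nonnegative (and finite: the integrand is integrable). -/
theorem Qalpha_integral_identity (α ε : ℝ) (hα : α ∈ Set.Icc (0 : ℝ) 2) (hε : 0 < ε)
    (r : ℝ → ℝ) (hrm : Measurable r) (hr0 : ∀ x, |x| ≤ ε → r x = 0)
    (hrpos : ∀ᵐ x ∂(volume : Measure ℝ), ε < |x| → 0 < x * r x)
    (hrodd : ∀ x, r (-x) = -r x)
    (f : ℝ → ℂ) (hf : Measurable f)
    (hfω : Integrable (fun x => ‖f x‖ ^ 2 * omegaW α r x)) :
    Integrable (fun x =>
      ((Real.sqrt (|x| ^ α + 1) : ℂ) * f x - (Real.sqrt (|x| ^ α) : ℂ) * f (-x)) *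
        (starRingEnd ℂ) (f x) * ((|r x| : ℝ) : ℂ)) ∧
    (∫ x, ((Real.sqrt (|x| ^ α + 1) : ℂ) * f x - (Real.sqrt (|x| ^ α) : ℂ) * f (-x)) *
        (starRingEnd ℂ) (f x) * ((|r x| : ℝ) : ℂ)) =
      (((2 * ∫ x, ‖oddPart f x‖ ^ 2 * omegaW α r x) + ∫ x, ‖f x‖ ^ 2 * eta α r x : ℝ) : ℂ) ∧
    0 ≤ (2 * ∫ x, ‖oddPart f x‖ ^ 2 * omegaW α r x) + ∫ x, ‖f x‖ ^ 2 * eta α r x := by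

  have hα0 : 0 ≤ α := hα.1
  have hεα : 0 < ε ^ α := Real.rpow_pos_of_pos hε α
  -- evenness of the weights
  have habs : ∀ x, |r (-x)| = |r x| := fun x => by rw [hrodd]; exact abs_neg _
  have hωe : ∀ x : ℝ, omegaW α r (-x) = omegaW α r x := fun x => by
    simp [omegaW, habs x, abs_neg]
  -- nonnegativity of the weights
  have hω0 : ∀ x, 0 ≤ omegaW α r x := fun x =>
    mul_nonneg (Real.sqrt_nonneg _) (abs_nonneg _)
  have hη0 : ∀ x, 0 ≤ eta α r x := fun x =>
    mul_nonneg (sub_nonneg.2 (Real.sqrt_le_sqrt (by linarith))) (abs_nonneg _)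
  -- measurability
  have hmt : Measurable fun x : ℝ => |x| ^ α :=
    (continuous_abs.rpow_const fun x => Or.inr hα0).measurable
  have hmω : Measurable (omegaW α r) := hmt.sqrt.mul hrm.abs
  have hmη : Measurable (eta α r) :=
    (((hmt.add_const 1).sqrt.sub hmt.sqrt).mul hrm.abs)
  have hfn : Measurable fun x => f (-x) := hf.comp measurable_neg
  -- pointwise bound η ≤ C·ω
  have hηω : ∀ x, eta α r x ≤ (2 * ε ^ α)⁻¹ * omegaW α r x := by
    intro x
    by_cases hx : r x = 0
    · simp [eta, omegaW, hx]
    · have hxε : ε < |x| := by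
        by_contra h
        exact hx (hr0 x (le_of_not_gt h))
      have htε : ε ^ α ≤ |x| ^ α := Real.rpow_le_rpow hε.le hxε.le hα0
      set t := |x| ^ α with htdef
      have ht0 : 0 < t := lt_of_lt_of_le hεα htε
      have hs : 0 < Real.sqrt t := Real.sqrt_pos.2 ht0
      have hsq : Real.sqrt t ^ 2 = t := Real.sq_sqrt ht0.le
      have hu : Real.sqrt (t + 1) ^ 2 = t + 1 := Real.sq_sqrt (by linarith)
      have hun : 0 ≤ Real.sqrt (t + 1) := Real.sqrt_nonneg _
      have hsu : Real.sqrt t ≤ Real.sqrt (t + 1) := Real.sqrt_le_sqrt (by linarith)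
      have hmul : (Real.sqrt (t + 1) - Real.sqrt t) *
          (Real.sqrt (t + 1) + Real.sqrt t) = 1 := by nlinarith
      have h1 : Real.sqrt (t + 1) - Real.sqrt t ≤ 1 / (2 * Real.sqrt t) := by
        have heq : Real.sqrt (t + 1) - Real.sqrt t =
            1 / (Real.sqrt (t + 1) + Real.sqrt t) := by
          field_simp
          linarith [hmul]
        rw [heq]
        apply one_div_le_one_div_of_le (by positivity)
        linarith
      have h2 : 1 / (2 * Real.sqrt t) ≤ (2 * ε ^ α)⁻¹ * Real.sqrt t := by
        rw [div_le_iff₀ (by positivity), inv_mul_eq_div, div_mul_eq_mul_div,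
          le_div_iff₀ (by positivity)]
        nlinarith
      have h3 : Real.sqrt (t + 1) - Real.sqrt t ≤ (2 * ε ^ α)⁻¹ * Real.sqrt t :=
        h1.trans h2
      have := mul_le_mul_of_nonneg_right h3 (abs_nonneg (r x))
      calc eta α r x = (Real.sqrt (t + 1) - Real.sqrt t) * |r x| := rfl
        _ ≤ (2 * ε ^ α)⁻¹ * Real.sqrt t * |r x| := this
        _ = (2 * ε ^ α)⁻¹ * omegaW α r x := by rw [omegaW]; ring
  -- integrability of ‖f‖² η
  have hfη : Integrable (fun x => ‖f x‖ ^ 2 * eta α r x) := by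
    apply (hfω.const_mul ((2 * ε ^ α)⁻¹)).mono'
      ((hf.norm.pow_const 2).mul hmη).aestronglyMeasurable
    filter_upwards with x
    have h1 : 0 ≤ ‖f x‖ ^ 2 * eta α r x := mul_nonneg (by positivity) (hη0 x)
    show ‖‖f x‖ ^ 2 * eta α r x‖ ≤ _
    rw [Real.norm_of_nonneg h1]
    have := mul_le_mul_of_nonneg_left (hηω x) (sq_nonneg ‖f x‖)
    calc ‖f x‖ ^ 2 * eta α r x ≤ ‖f x‖ ^ 2 * ((2 * ε ^ α)⁻¹ * omegaW α r x) := this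
      _ = (2 * ε ^ α)⁻¹ * (‖f x‖ ^ 2 * omegaW α r x) := by ring
  -- integrability of ‖f(-·)‖² ω
  have hfω' : Integrable (fun x => ‖f (-x)‖ ^ 2 * omegaW α r x) := by
    have h := hfω.comp_neg
    simp only [hωe] at h
    exact h
  -- integrability of ‖f_o‖² ω
  have hoddω : Integrable (fun x => ‖oddPart f x‖ ^ 2 * omegaW α r x) := by
    apply ((hfω.add hfω').const_mul (1 / 2)).mono'
      ((((hf.sub hfn).div_const 2).norm.pow_const 2).mul hmω).aestronglyMeasurable
    filter_upwards with x
    simp only [Pi.add_apply, oddPart]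
    show ‖‖(f x - f (-x)) / 2‖ ^ 2 * omegaW α r x‖ ≤ _
    rw [Real.norm_of_nonneg (mul_nonneg (by positivity) (hω0 x))]
    have hno : ‖(f x - f (-x)) / 2‖ ≤ (‖f x‖ + ‖f (-x)‖) / 2 := by
      calc ‖(f x - f (-x)) / 2‖ = ‖f x - f (-x)‖ / 2 := by
            rw [norm_div]; norm_num
        _ ≤ (‖f x‖ + ‖f (-x)‖) / 2 := by
            have := norm_sub_le (f x) (f (-x)); linarith
    have hno2 : ‖(f x - f (-x)) / 2‖ ^ 2 ≤ (‖f x‖ ^ 2 + ‖f (-x)‖ ^ 2) / 2 := by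
      nlinarith [norm_nonneg ((f x - f (-x)) / 2), norm_nonneg (f x), norm_nonneg (f (-x)),
        sq_nonneg (‖f x‖ - ‖f (-x)‖)]
    calc ‖(f x - f (-x)) / 2‖ ^ 2 * omegaW α r x
        ≤ (‖f x‖ ^ 2 + ‖f (-x)‖ ^ 2) / 2 * omegaW α r x :=
          mul_le_mul_of_nonneg_right hno2 (hω0 x)
      _ = 1 / 2 * (‖f x‖ ^ 2 * omegaW α r x + ‖f (-x)‖ ^ 2 * omegaW α r x) := by ring
  -- the decomposition F = A + B
  set F : ℝ → ℂ := fun x =>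
    ((Real.sqrt (|x| ^ α + 1) : ℂ) * f x - (Real.sqrt (|x| ^ α) : ℂ) * f (-x)) *
      (starRingEnd ℂ) (f x) * ((|r x| : ℝ) : ℂ) with hF
  set A : ℝ → ℂ := fun x => ((‖f x‖ ^ 2 * eta α r x : ℝ) : ℂ) with hA
  set B : ℝ → ℂ := fun x =>
    ((omegaW α r x : ℝ) : ℂ) * ((f x - f (-x)) * (starRingEnd ℂ) (f x)) with hB
  have hFAB : ∀ x, F x = A x + B x := by
    intro x
    simp only [hF, hA, hB, eta, omegaW]
    push_cast
    rw [show ((‖f x‖ : ℝ) : ℂ) ^ 2 = f x * (starRingEnd ℂ) (f x) from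
      (Complex.mul_conj' (f x)).symm]
    ring
  have hAint : Integrable A := hfη.ofReal
  have hBmeas : AEStronglyMeasurable B volume :=
    ((Complex.measurable_ofReal.comp hmω).mul
      ((hf.sub hfn).mul (Complex.continuous_conj.measurable.comp hf))).aestronglyMeasurable
  have hBint : Integrable B := by
    apply ((hfω.const_mul (3 / 2)).add (hfω'.const_mul (1 / 2))).mono' hBmeas
    filter_upwards with x
    have hBn : ‖B x‖ = omegaW α r x * (‖f x - f (-x)‖ * ‖f x‖) := by
      simp only [hB, norm_mul, Complex.norm_real, Real.norm_of_nonneg (hω0 x),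
        RingHomIsometric.norm_map]
    rw [hBn]
    have htr : ‖f x - f (-x)‖ ≤ ‖f x‖ + ‖f (-x)‖ := norm_sub_le _ _
    have h1 : ‖f x - f (-x)‖ * ‖f x‖ ≤ (3 / 2) * ‖f x‖ ^ 2 + (1 / 2) * ‖f (-x)‖ ^ 2 := by
      nlinarith [norm_nonneg (f x), norm_nonneg (f (-x)), norm_nonneg (f x - f (-x)),
        sq_nonneg (‖f x‖ - ‖f (-x)‖)]
    calc omegaW α r x * (‖f x - f (-x)‖ * ‖f x‖)
        ≤ omegaW α r x * ((3 / 2) * ‖f x‖ ^ 2 + (1 / 2) * ‖f (-x)‖ ^ 2) :=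
          mul_le_mul_of_nonneg_left h1 (hω0 x)
      _ = 3 / 2 * (‖f x‖ ^ 2 * omegaW α r x) + 1 / 2 * (‖f (-x)‖ ^ 2 * omegaW α r x) := by
          ring
  have hFint : Integrable F :=
    (hAint.add hBint).congr (Filter.Eventually.of_forall fun x => (hFAB x).symm)
  -- the symmetrization identity for ∫ B
  have hBsum : ∀ x : ℝ, B x + B (-x) =
      ((4 * (‖oddPart f x‖ ^ 2 * omegaW α r x) : ℝ) : ℂ) := by
    intro x
    simp only [hB, hωe, neg_neg, oddPart]
    have hz : (f x - f (-x)) * (starRingEnd ℂ) (f x) +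
        (f (-x) - f x) * (starRingEnd ℂ) (f (-x)) =
        (f x - f (-x)) * (starRingEnd ℂ) (f x - f (-x)) := by
      rw [map_sub]; ring
    rw [← mul_add, hz, Complex.mul_conj']
    have hnn : ‖(f x - f (-x)) / 2‖ = ‖f x - f (-x)‖ / 2 := by
      rw [norm_div]; norm_num
    rw [hnn]
    push_cast
    ring
  have hIB : ∫ x, B x = ((2 * ∫ x, ‖oddPart f x‖ ^ 2 * omegaW α r x : ℝ) : ℂ) := by
    have hBneg : Integrable (fun x => B (-x)) := hBint.comp_neg
    have h1 : (∫ x, B x) + (∫ x, B x) = ∫ x, (B x + B (-x)) := by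
      rw [integral_add hBint hBneg, integral_neg_eq_self B]
    have h2 : (∫ x, (B x + B (-x))) =
        ((4 * ∫ x, ‖oddPart f x‖ ^ 2 * omegaW α r x : ℝ) : ℂ) := by
      rw [show (fun x => B x + B (-x)) =
          fun x => ((4 * (‖oddPart f x‖ ^ 2 * omegaW α r x) : ℝ) : ℂ) from
        funext hBsum]
      have e1 : (∫ x, ((4 * (‖oddPart f x‖ ^ 2 * omegaW α r x) : ℝ) : ℂ)) =
          ((∫ x, 4 * (‖oddPart f x‖ ^ 2 * omegaW α r x) : ℝ) : ℂ) := integral_ofReal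
      rw [e1, integral_const_mul]
    have h3 : (2 : ℂ) * ∫ x, B x =
        ((4 * ∫ x, ‖oddPart f x‖ ^ 2 * omegaW α r x : ℝ) : ℂ) := by
      rw [two_mul, h1, h2]
    have := congrArg (fun z => (2 : ℂ)⁻¹ * z) h3
    simp only [inv_mul_cancel_left₀ (two_ne_zero (α := ℂ))] at this
    rw [this]
    push_cast
    ring
  refine ⟨hFint, ?_, ?_⟩
  · have : (∫ x, F x) = (∫ x, A x) + ∫ x, B x := by
      rw [show (fun x => F x) = fun x => A x + B x from funext hFAB]
      exact integral_add hAint hBint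
    have eA : (∫ x, A x) = ((∫ x, ‖f x‖ ^ 2 * eta α r x : ℝ) : ℂ) := integral_ofReal
    rw [this, hIB, eA]
    push_cast
    ring
  · have hJ : 0 ≤ ∫ x, ‖oddPart f x‖ ^ 2 * omegaW α r x :=
      integral_nonneg fun x => mul_nonneg (by positivity) (hω0 x)
    have hK : 0 ≤ ∫ x, ‖f x‖ ^ 2 * eta α r x :=
      integral_nonneg fun x => mul_nonneg (by positivity) (hη0 x)
    linarith
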